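/- Let C be a k×k (−1,1)-matrix of rank m ≥ 1 over ℚ and let b be a column vector of length k with entries in {−1,1}. For i = 1,…,k let C_i denote the matrix obtained from C by replacing its i-th column with b. Then: (1) if b lies in the ℚ-linear span of the columns of C, and l denotes the smallest cardinality of a set of columns of C whose span contains b (so l ≤ m), then for every i one has rank C_i ∈ {m−1, m}, and the number of indices i with rank C_i = m−1 is at most m−l; (2) if b does not lie in the span of the columns of C, then for every i one has rank C_i ∈ {m, m+1}. -/

import Mathlib

open Matrix

open Submodule Module

section Aux

variable {E : Type*} [AddCommGroup E] [Module ℚ E] [FiniteDimensional ℚ E]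

lemma aux_finrank_span_insert_le (s : Set E) (x : E) :
    finrank ℚ (span ℚ (insert x s)) ≤ finrank ℚ (span ℚ s) + 1 := by
  classical
  rw [Submodule.span_insert]
  refine (Submodule.finrank_add_le_finrank_add_finrank _ _).trans ?_
  have h1 : finrank ℚ (span ℚ ({x} : Set E)) ≤ 1 := by
    refine (finrank_span_le_card ({x} : Set E)).trans ?_
    simp
  omega

lemma aux_finrank_span_insert_not_mem {s : Set E} {x : E} (h : x ∉ span ℚ s) :
    finrank ℚ (span ℚ (insert x s)) = finrank ℚ (span ℚ s) + 1 := by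
  have hlt : span ℚ s < span ℚ (insert x s) := by
    refine lt_of_le_of_ne (span_mono (Set.subset_insert _ _)) (fun he => h ?_)
    rw [he]
    exact subset_span (Set.mem_insert _ _)
  have h1 := Submodule.finrank_lt_finrank_of_lt hlt
  have h2 := aux_finrank_span_insert_le s x
  omega

lemma aux_range_update {k : ℕ} (f : Fin k → E) (i : Fin k) (x : E) :
    Set.range (Function.update f i x) = insert x (f '' ({i}ᶜ : Set (Fin k))) := by
  classical
  ext y
  simp only [Set.mem_range, Set.mem_insert_iff, Set.mem_image, Set.mem_compl_iff,
    Set.mem_singleton_iff]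
  constructor
  · rintro ⟨j, rfl⟩
    by_cases hj : j = i
    · subst hj; left; rw [Function.update_self]
    · right; exact ⟨j, hj, (Function.update_of_ne hj _ _).symm⟩
  · rintro (rfl | ⟨j, hj, rfl⟩)
    · exact ⟨i, Function.update_self _ _ _⟩
    · exact ⟨j, Function.update_of_ne hj _ _⟩

lemma aux_finrank_union {k : ℕ} (f : Fin k → E) (S : Finset (Fin k)) (T : Finset (Fin k)) :
    (∀ i ∈ T, f i ∉ span ℚ (f '' ↑(S ∪ T.erase i))) →
    finrank ℚ (span ℚ (f '' ↑S)) + T.card ≤ finrank ℚ (span ℚ (f '' ↑(S ∪ T))) := by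
  classical
  induction T using Finset.induction_on with
  | empty =>
      intro _
      rw [Finset.union_empty]
      simp
  | @insert i T₀ hi ih =>
      intro h
      have h0 : ∀ j ∈ T₀, f j ∉ span ℚ (f '' ↑(S ∪ T₀.erase j)) := by
        intro j hj hmem
        refine h j (Finset.mem_insert_of_mem hj) ?_
        refine span_mono (Set.image_mono ?_) hmem
        intro a ha
        simp only [Finset.coe_union, Set.mem_union, Finset.mem_coe] at ha ⊢
        rcases ha with ha | ha
        · exact Or.inl ha
        · exact Or.inr (Finset.erase_subset_erase _ (Finset.subset_insert i T₀) ha)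
      have hi' : f i ∉ span ℚ (f '' ↑(S ∪ T₀)) := by
        have := h i (Finset.mem_insert_self _ _)
        rwa [Finset.erase_insert hi] at this
      have hcoe : (↑(S ∪ insert i T₀) : Set (Fin k)) = insert i ↑(S ∪ T₀) := by
        rw [Finset.union_insert, Finset.coe_insert]
      rw [hcoe, Set.image_insert_eq, aux_finrank_span_insert_not_mem hi',
        Finset.card_insert_of_notMem hi]
      have := ih h0
      omega

lemma aux_exists_subset {k : ℕ} (f : Fin k → E) :
    ∀ n (S : Finset (Fin k)), S.card ≤ n → ∃ S', S' ⊆ S ∧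
      span ℚ (f '' ↑S') = span ℚ (f '' ↑S) ∧
      S'.card ≤ finrank ℚ (span ℚ (f '' ↑S)) := by
  classical
  intro n
  induction n with
  | zero =>
      intro S hS
      have : S = ∅ := Finset.card_eq_zero.mp (Nat.le_zero.mp hS)
      subst this
      exact ⟨∅, Finset.Subset.refl _, rfl, by simp⟩
  | succ n ih =>
      intro S hS
      by_cases h : ∃ i ∈ S, f i ∈ span ℚ (f '' ↑(S.erase i))
      · obtain ⟨i, hiS, hmem⟩ := h
        have hcoe : (↑S : Set (Fin k)) = insert i ↑(S.erase i) := by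
          rw [← Finset.coe_insert, Finset.insert_erase hiS]
        have hspan : span ℚ (f '' ↑S) = span ℚ (f '' ↑(S.erase i)) := by
          rw [hcoe, Set.image_insert_eq, span_insert_eq_span hmem]
        have hcard : (S.erase i).card ≤ n := by
          have h1 := Finset.card_erase_of_mem hiS
          have h2 : 1 ≤ S.card := Finset.card_pos.mpr ⟨i, hiS⟩
          omega
        obtain ⟨S', hsub, hspan', hle⟩ := ih (S.erase i) hcard
        refine ⟨S', hsub.trans (Finset.erase_subset _ _), ?_, ?_⟩
        · rw [hspan', hspan]
        · rw [hspan]; exact hle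
      · push_neg at h
        refine ⟨S, Finset.Subset.refl _, rfl, ?_⟩
        have := aux_finrank_union f ∅ S (by
          intro i hiT
          simpa using h i hiT)
        rw [Finset.empty_union] at this
        exact le_trans (Nat.le_add_left _ _) this

end Aux

open scoped Classical in
theorem rank_replace_column (k m : ℕ) (C : Matrix (Fin k) (Fin k) ℚ)
    (hC : ∀ i j, C i j = 1 ∨ C i j = -1) (hrk : C.rank = m) (hm : 1 ≤ m)
    (b : Fin k → ℚ) (hb : ∀ i, b i = 1 ∨ b i = -1) :
    (∀ l : ℕ,
      IsLeast {c : ℕ | ∃ S : Finset (Fin k), S.card = c ∧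
        b ∈ Submodule.span ℚ ((fun j i => C i j) '' ↑S)} l →
      (∀ i : Fin k, (C.updateCol i b).rank = m - 1 ∨ (C.updateCol i b).rank = m) ∧
        (Finset.univ.filter
          (fun i : Fin k => (C.updateCol i b).rank = m - 1)).card ≤ m - l) ∧
    (b ∉ Submodule.span ℚ (Set.range (fun j i => C i j)) →
      ∀ i : Fin k, (C.updateCol i b).rank = m ∨ (C.updateCol i b).rank = m + 1) := by
  classical
  set f : Fin k → (Fin k → ℚ) := fun j i => C i j with hf
  have hft : Cᵀ = f := rfl
  have hV : finrank ℚ (span ℚ (Set.range f)) = m := by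
    rw [show f = C.col from rfl, ← Matrix.rank_eq_finrank_span_cols, hrk]
  have key : ∀ i : Fin k, (C.updateCol i b).rank =
      finrank ℚ (span ℚ (insert b (f '' ({i}ᶜ : Set (Fin k))))) := by
    intro i
    rw [Matrix.rank_eq_finrank_span_cols, Matrix.col]
    have ht : (C.updateCol i b)ᵀ = Function.update f i b := by
      rw [← Matrix.updateRow_transpose, hft]
      rfl
    rw [ht, aux_range_update]
  have hrange : ∀ i : Fin k, Set.range f = insert (f i) (f '' ({i}ᶜ : Set (Fin k))) := by
    intro i
    rw [← Set.image_univ]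
    have : (Set.univ : Set (Fin k)) = insert i ({i}ᶜ : Set (Fin k)) := by
      rw [Set.insert_eq, Set.union_compl_self]
    rw [this, Set.image_insert_eq]
  have hVi_le : ∀ i : Fin k, span ℚ (f '' ({i}ᶜ : Set (Fin k))) ≤ span ℚ (Set.range f) :=
    fun i => span_mono (Set.image_subset_range f _)
  have hVi_ge : ∀ i : Fin k, m ≤ finrank ℚ (span ℚ (f '' ({i}ᶜ : Set (Fin k)))) + 1 := by
    intro i
    calc m = finrank ℚ (span ℚ (Set.range f)) := hV.symm
      _ = finrank ℚ (span ℚ (insert (f i) (f '' ({i}ᶜ : Set (Fin k))))) := by rw [← hrange i]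
      _ ≤ _ := aux_finrank_span_insert_le _ _
  have hVi_le' : ∀ i : Fin k, finrank ℚ (span ℚ (f '' ({i}ᶜ : Set (Fin k)))) ≤ m :=
    fun i => hV ▸ Submodule.finrank_mono (hVi_le i)
  constructor
  · intro l hl
    obtain ⟨S, hScard, hbS⟩ := hl.1
    have hbV : b ∈ span ℚ (Set.range f) := span_mono (Set.image_subset_range f _) hbS
    have hall : ∀ i : Fin k,
        (C.updateCol i b).rank = m - 1 ∨ (C.updateCol i b).rank = m := by
      intro i
      rw [key i]
      by_cases hd : finrank ℚ (span ℚ (f '' ({i}ᶜ : Set (Fin k)))) = m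
      · have heq : span ℚ (f '' ({i}ᶜ : Set (Fin k))) = span ℚ (Set.range f) :=
          Submodule.eq_of_le_of_finrank_le (hVi_le i) (by rw [hV, hd])
        have hb' : b ∈ span ℚ (f '' ({i}ᶜ : Set (Fin k))) := by rw [heq]; exact hbV
        right; rw [span_insert_eq_span hb', hd]
      · have h1 := hVi_ge i
        have h2 := hVi_le' i
        have hle := aux_finrank_span_insert_le (f '' ({i}ᶜ : Set (Fin k))) b
        have hge : finrank ℚ (span ℚ (f '' ({i}ᶜ : Set (Fin k)))) ≤
            finrank ℚ (span ℚ (insert b (f '' ({i}ᶜ : Set (Fin k))))) :=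
          Submodule.finrank_mono (span_mono (Set.subset_insert _ _))
        omega
    refine ⟨hall, ?_⟩
    set T := Finset.univ.filter
      (fun i : Fin k => (C.updateCol i b).rank = m - 1) with hTdef
    have hTfact : ∀ i ∈ T, b ∈ span ℚ (f '' ({i}ᶜ : Set (Fin k))) ∧
        f i ∉ span ℚ (f '' ({i}ᶜ : Set (Fin k))) := by
      intro i hiT
      have hri : (C.updateCol i b).rank = m - 1 := (Finset.mem_filter.mp hiT).2
      rw [key i] at hri
      have hWge : finrank ℚ (span ℚ (f '' ({i}ᶜ : Set (Fin k)))) ≤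
          finrank ℚ (span ℚ (insert b (f '' ({i}ᶜ : Set (Fin k))))) :=
        Submodule.finrank_mono (span_mono (Set.subset_insert _ _))
      have h1 := hVi_ge i
      have heq : span ℚ (f '' ({i}ᶜ : Set (Fin k))) =
          span ℚ (insert b (f '' ({i}ᶜ : Set (Fin k)))) :=
        Submodule.eq_of_le_of_finrank_le (span_mono (Set.subset_insert _ _)) (by omega)
      refine ⟨by rw [heq]; exact subset_span (Set.mem_insert _ _), ?_⟩
      intro hmem
      have hVeq : span ℚ (Set.range f) = span ℚ (f '' ({i}ᶜ : Set (Fin k))) := by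
        rw [hrange i, span_insert_eq_span hmem]
      have hfin : finrank ℚ (span ℚ (f '' ({i}ᶜ : Set (Fin k)))) = m := by
        rw [← hVeq, hV]
      omega
    have hk : 0 < k := by
      have h1 : C.rank ≤ k := Matrix.rank_le_height C
      omega
    have hl1 : 1 ≤ l := by
      by_contra h
      have hl0 : l = 0 := by omega
      rw [hl0] at hScard
      have hSe : S = ∅ := Finset.card_eq_zero.mp hScard
      rw [hSe] at hbS
      simp only [Finset.coe_empty, Set.image_empty, Submodule.span_empty,
        Submodule.mem_bot] at hbS
      have := hb ⟨0, hk⟩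
      rw [hbS] at this
      simp at this
    have hST : ∀ i ∈ T, i ∉ S := by
      intro i hiT hiS
      obtain ⟨hbVi, hfi⟩ := hTfact i hiT
      have hbne : b ∉ span ℚ (f '' ↑(S.erase i)) := by
        intro hmem
        have hle2 : l ≤ (S.erase i).card := hl.2 ⟨S.erase i, rfl, hmem⟩
        rw [Finset.card_erase_of_mem hiS, hScard] at hle2
        omega
      have hcoeS : (↑S : Set (Fin k)) = insert i ↑(S.erase i) := by
        rw [← Finset.coe_insert, Finset.insert_erase hiS]
      have hbmem : b ∈ span ℚ (insert (f i) (f '' ↑(S.erase i))) := by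
        rw [← Set.image_insert_eq, ← hcoeS]; exact hbS
      have hfi' : f i ∈ span ℚ (insert b (f '' ↑(S.erase i))) :=
        mem_span_insert_exchange hbmem hbne
      apply hfi
      have hle3 : span ℚ (insert b (f '' ↑(S.erase i))) ≤
          span ℚ (f '' ({i}ᶜ : Set (Fin k))) := by
        rw [Submodule.span_le]
        refine Set.insert_subset_iff.mpr ⟨hbVi, ?_⟩
        refine (Set.image_mono ?_).trans subset_span
        intro j hj
        simp only [Finset.coe_erase, Set.mem_diff, Set.mem_singleton_iff, Finset.mem_coe] at hj
        simp only [Set.mem_compl_iff, Set.mem_singleton_iff]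
        exact hj.2
      exact hle3 hfi'
    have hdisj : ∀ i ∈ T, f i ∉ span ℚ (f '' ↑(S ∪ T.erase i)) := by
      intro i hiT hmem
      refine (hTfact i hiT).2 (span_mono (Set.image_mono ?_) hmem)
      intro j hj
      simp only [Finset.coe_union, Set.mem_union, Finset.mem_coe] at hj
      simp only [Set.mem_compl_iff, Set.mem_singleton_iff]
      rcases hj with hj | hj
      · intro hji; exact hST i hiT (hji ▸ hj)
      · exact Finset.ne_of_mem_erase hj
    have hun := aux_finrank_union f S T hdisj
    have hbase : l ≤ finrank ℚ (span ℚ (f '' ↑S)) := by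
      obtain ⟨S', hsub, hspan, hcard⟩ := aux_exists_subset f S.card S le_rfl
      have hle4 : l ≤ S'.card := hl.2 ⟨S', rfl, by rw [hspan]; exact hbS⟩
      omega
    have htop : finrank ℚ (span ℚ (f '' ↑(S ∪ T))) ≤ m :=
      hV ▸ Submodule.finrank_mono (span_mono (Set.image_subset_range f _))
    omega
  · intro hbV i
    rw [key i]
    have hbVi : b ∉ span ℚ (f '' ({i}ᶜ : Set (Fin k))) := fun h => hbV (hVi_le i h)
    have heq := aux_finrank_span_insert_not_mem hbVi
    have h1 := hVi_ge i
    have h2 := hVi_le' i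
    omega
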